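/- Let q be prime and let W be a memoryless symmetric channel with input alphabet 𝒳 = 𝔽_q and finite output alphabet 𝒴. For every R with 0 < R < R_max(W), there exist a constant E > 0, a sequence of integers K_L with (K_L/L)·log q → R as L → ∞, and for every sufficiently large L a generator matrix G_L ∈ 𝔽_q^{K_L × L}, such that the linear block code with codebook {mG_L : m ∈ 𝔽_q^{K_L}} has average (over messages) block erasure probability under zero-undetected-error decoding at most e^{−E·L}. -/

import Mathlib

open Finset

-- The `L`-fold memoryless extension of a channel `W` (with `W x y` meaning `W(y|x)`).
noncomputable def WL {X Y : Type*} (W : X → Y → ℝ) (L : ℕ)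
    (x : Fin L → X) (y : Fin L → Y) : ℝ :=
  ∏ i, W (x i) (y i)

-- Conditional erasure probability of message `m` for the codebook `cb` (indexed by
-- messages, possibly with repeated codewords) under zero-undetected-error decoding.
open Classical in
noncomputable def erasureProbMsg {X Y M : Type*} [Fintype Y] [Fintype M]
    (W : X → Y → ℝ) (L : ℕ) (cb : M → Fin L → X) (m : M) : ℝ :=
  ∑ y : Fin L → Y,
    if ∃ m0 : M, 0 < WL W L (cb m0) y ∧ ∀ m' : M, m' ≠ m0 → WL W L (cb m') y = 0 then 0
    else WL W L (cb m) y

-- `R_max(W) = Σ_y (PW)(y)·log(1/P(𝒳(y)))`, where `P` is the uniform distribution on the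
-- input alphabet and `𝒳(y) = {x : W(y|x) > 0}`.
open Classical in
noncomputable def Rmax {X Y : Type*} [Fintype X] [Fintype Y] (W : X → Y → ℝ) : ℝ :=
  ∑ y : Y, ((∑ x : X, W x y) / (Fintype.card X : ℝ)) *
    Real.log ((Fintype.card X : ℝ) / ((Finset.univ.filter fun x : X => 0 < W x y).card : ℝ))

lemma exp_le_quadratic {t : ℝ} (ht : t ≤ 0) : Real.exp t ≤ 1 + t + t^2 := by
  have h1 : 1 - t ≤ Real.exp (-t) := by have := Real.add_one_le_exp (-t); linarith
  have h2 : Real.exp t * Real.exp (-t) = 1 := by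
    rw [← Real.exp_add, add_neg_cancel, Real.exp_zero]
  have h3 : 0 < Real.exp (-t) := Real.exp_pos _
  have h4 : 0 ≤ 1 + t + t^2 := by nlinarith [sq_nonneg (t+1), sq_nonneg t]
  have h5 : Real.exp t * Real.exp (-t) ≤ (1 + t + t^2) * Real.exp (-t) := by
    rw [h2]
    calc (1:ℝ) ≤ 1 - t^3 := by nlinarith [sq_nonneg t, mul_nonneg (neg_nonneg.2 ht) (sq_nonneg t)]
      _ = (1 + t + t^2) * (1 - t) := by ring
      _ ≤ (1 + t + t^2) * Real.exp (-t) := mul_le_mul_of_nonneg_left h1 h4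
  exact le_of_mul_le_mul_right h5 h3

open Classical in
noncomputable def Ncomp {q : ℕ} [NeZero q] {Y : Type*} (W : ZMod q → Y → ℝ) (y : Y) : ℕ :=
  (Finset.univ.filter fun x : ZMod q => 0 < W x y).card

lemma sum_comp_addHom {A B : Type*} [Fintype A] [Fintype B] [DecidableEq B]
    [AddCommGroup A] [AddCommGroup B] (φ : A →+ B) (hsurj : Function.Surjective φ)
    (f : B → ℝ) :
    (Fintype.card B : ℝ) * ∑ a, f (φ a) = (Fintype.card A : ℝ) * ∑ b, f b := by
  classical
  have hfib : ∀ b : B, (univ.filter fun a : A => φ a = b).card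
      = (univ.filter fun a : A => φ a = 0).card := by
    intro b
    obtain ⟨d, hd⟩ := hsurj b
    apply Finset.card_bij (fun a _ => a - d)
    · intro a ha
      simp only [mem_filter, mem_univ, true_and] at ha ⊢
      rw [map_sub, ha, hd, sub_self]
    · intro a₁ h₁ a₂ h₂ h
      exact sub_left_injective h
    · intro a ha
      simp only [mem_filter, mem_univ, true_and] at ha
      exact ⟨a + d, by simp [mem_filter, map_add, ha, hd], by simp⟩
  have h1 : ∑ a : A, f (φ a)
      = ((univ.filter fun a : A => φ a = 0).card : ℝ) * ∑ b, f b := by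
    rw [Finset.sum_comp f φ, Finset.image_univ_of_surjective hsurj, Finset.mul_sum]
    refine Finset.sum_congr rfl fun b _ => ?_
    rw [hfib b, nsmul_eq_mul]
  have h2 : (Fintype.card A : ℕ)
      = (univ.filter fun a : A => φ a = 0).card * Fintype.card B := by
    rw [← Finset.card_univ, Finset.card_eq_sum_card_fiberwise (f := φ) (t := univ)
      (fun x _ => mem_univ _)]
    simp_rw [hfib]
    rw [Finset.sum_const, Finset.card_univ, smul_eq_mul, mul_comm]
  rw [h1, h2]
  push_cast
  ring

lemma vecMul_surjective {q K L : ℕ} [Fact q.Prime] {m : Fin K → ZMod q} (hm : m ≠ 0) :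
    Function.Surjective fun G : Matrix (Fin K) (Fin L) (ZMod q) => Matrix.vecMul m G := by
  obtain ⟨k, hk⟩ := Function.ne_iff.1 hm
  intro c
  refine ⟨fun i j => if i = k then (m k)⁻¹ * c j else 0, ?_⟩
  funext j
  simp only [Matrix.vecMul, dotProduct]
  rw [Finset.sum_eq_single k]
  · rw [if_pos rfl, ← mul_assoc, mul_inv_cancel₀ hk, one_mul]
  · intro i _ hi; rw [if_neg hi, mul_zero]
  · intro h; exact absurd (mem_univ k) h

lemma exists_good_G {q : ℕ} [Fact q.Prime] {Y : Type*} [Fintype Y]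
    (W : ZMod q → Y → ℝ) (hW0 : ∀ x y, 0 ≤ W x y) (hW1 : ∀ x, ∑ y, W x y = 1)
    (K L : ℕ) (a s : ℝ) (hs0 : 0 ≤ s) :
    ∃ G : Matrix (Fin K) (Fin L) (ZMod q),
      erasureProbMsg W L (fun m' => Matrix.vecMul m' G) 0 ≤
        Real.exp (s*a*L) * (∑ y, W 0 y * ((Ncomp W y : ℝ)/(q : ℝ)) ^ s) ^ L
          + (q : ℝ)^K * Real.exp (-(a*L)) := by
  classical
  haveI : NeZero q := ⟨(Fact.out : q.Prime).ne_zero⟩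
  have hq0 : (0:ℝ) < (q:ℝ) := by
    exact_mod_cast (Fact.out : q.Prime).pos
  set β : (Fin L → Y) → ℝ := fun y => ∏ i, ((Ncomp W (y i) : ℝ)/(q:ℝ)) with hβ
  set thr : ℝ := Real.exp (-(a*L)) with hthr
  set f0 : ℝ := ∑ y, W 0 y * ((Ncomp W y : ℝ)/(q : ℝ)) ^ s with hf0
  have hβnn : ∀ y, 0 ≤ β y := fun y =>
    Finset.prod_nonneg fun i _ => div_nonneg (Nat.cast_nonneg _) hq0.le
  set W0L : (Fin L → Y) → ℝ := fun y => ∏ i, W 0 (y i) with hW0L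
  have hW0Lnn : ∀ y, 0 ≤ W0L y := fun y => Finset.prod_nonneg fun i _ => hW0 _ _
  have hsumW0L : ∑ y : Fin L → Y, W0L y = 1 := by
    have h := Finset.prod_univ_sum (fun _ : Fin L => (univ : Finset Y))
      (fun _ y => W 0 y)
    rw [Fintype.piFinset_univ] at h
    rw [hW0L, ← h]
    simp [hW1 0]
  -- counting: for m' ≠ 0 the average of the compatibility indicator is β y
  have hcount : ∀ (m' : Fin K → ZMod q), m' ≠ 0 → ∀ y : Fin L → Y,
      ∑ G : Matrix (Fin K) (Fin L) (ZMod q),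
        (if 0 < WL W L (Matrix.vecMul m' G) y then (1:ℝ) else 0)
      = (Fintype.card (Matrix (Fin K) (Fin L) (ZMod q)) : ℝ) * β y := by
    intro m' hm' y
    set φ : Matrix (Fin K) (Fin L) (ZMod q) →+ (Fin L → ZMod q) :=
      AddMonoidHom.mk' (fun G => Matrix.vecMul m' G) (fun A B => Matrix.vecMul_add A B m')
      with hφ
    have hsurj : Function.Surjective φ := vecMul_surjective hm'
    have key := sum_comp_addHom φ hsurj (fun c => if 0 < WL W L c y then (1:ℝ) else 0)
    have hprod : ∀ c : Fin L → ZMod q, (if 0 < WL W L c y then (1:ℝ) else 0)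
        = ∏ i, (if 0 < W (c i) (y i) then (1:ℝ) else 0) := by
      intro c
      rw [Finset.prod_boole]
      by_cases h : ∀ i ∈ (univ : Finset (Fin L)), 0 < W (c i) (y i)
      · rw [if_pos, if_pos h]
        exact Finset.prod_pos fun i hi => h i hi
      · rw [if_neg, if_neg h]
        push_neg at h
        obtain ⟨i, hi, hni⟩ := h
        have : W (c i) (y i) = 0 := le_antisymm hni (hW0 _ _)
        rw [WL, Finset.prod_eq_zero hi this]
        exact lt_irrefl 0
    have hsum_c : ∑ c : Fin L → ZMod q, (if 0 < WL W L c y then (1:ℝ) else 0)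
        = ∏ i, (Ncomp W (y i) : ℝ) := by
      simp_rw [hprod]
      have h := Finset.prod_univ_sum (fun _ : Fin L => (univ : Finset (ZMod q)))
        (fun i x => if 0 < W x (y i) then (1:ℝ) else 0)
      rw [Fintype.piFinset_univ] at h
      rw [← h]
      refine Finset.prod_congr rfl fun i _ => ?_
      rw [Finset.sum_boole]
      unfold Ncomp
      congr 1
    have hcards : (Fintype.card (Fin L → ZMod q) : ℝ) = (q:ℝ)^L := by
      rw [Fintype.card_fun, ZMod.card, Fintype.card_fin]
      push_cast; ring
    rw [hsum_c, hcards] at key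
    have hβ2 : β y = (∏ i, (Ncomp W (y i) : ℝ)) / (q:ℝ)^L := by
      show ∏ i, ((Ncomp W (y i) : ℝ)/(q:ℝ)) = _
      rw [Finset.prod_div_distrib, Finset.prod_const, Finset.card_univ, Fintype.card_fin]
    have hqL : ((q:ℝ))^L ≠ 0 := pow_ne_zero _ hq0.ne'
    have : ∑ G : Matrix (Fin K) (Fin L) (ZMod q),
        (if 0 < WL W L (Matrix.vecMul m' G) y then (1:ℝ) else 0)
        = ∑ G : Matrix (Fin K) (Fin L) (ZMod q),
        (if 0 < WL W L (φ G) y then (1:ℝ) else 0) := rfl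
    rw [this]
    rw [hβ2, ← mul_div_assoc]
    rw [eq_div_iff hqL, mul_comm _ ((q:ℝ)^L)]
    rw [← key]
  have hWLnn : ∀ (x : Fin L → ZMod q) (y : Fin L → Y), 0 ≤ WL W L x y :=
    fun x y => Finset.prod_nonneg fun i _ => hW0 _ _
  set Count : Matrix (Fin K) (Fin L) (ZMod q) → (Fin L → Y) → ℝ :=
    fun G y => ∑ m' ∈ univ.filter (fun m' : Fin K → ZMod q => m' ≠ 0),
      (if 0 < WL W L (Matrix.vecMul m' G) y then (1:ℝ) else 0) with hCount
  have hCountnn : ∀ G y, 0 ≤ Count G y := fun G y =>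
    Finset.sum_nonneg fun _ _ => by split <;> norm_num
  have hWL0 : ∀ (G : Matrix (Fin K) (Fin L) (ZMod q)) (y : Fin L → Y),
      WL W L (Matrix.vecMul (0 : Fin K → ZMod q) G) y = W0L y := by
    intro G y
    rw [Matrix.zero_vecMul]
    rfl
  have hindnn : ∀ y : Fin L → Y, (0:ℝ) ≤ (if thr ≤ β y then (1:ℝ) else 0) := by
    intro y; split <;> norm_num
  have hindnn' : ∀ y : Fin L → Y, (0:ℝ) ≤ (if thr ≤ β y then (0:ℝ) else 1) := by
    intro y; split <;> norm_num
  have hpoint : ∀ G : Matrix (Fin K) (Fin L) (ZMod q),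
      erasureProbMsg W L (fun m' => Matrix.vecMul m' G) 0
        ≤ ∑ y : Fin L → Y, W0L y *
            ((if thr ≤ β y then (1:ℝ) else 0)
              + (if thr ≤ β y then (0:ℝ) else 1) * Count G y) := by
    intro G
    simp only [erasureProbMsg]
    refine Finset.sum_le_sum fun y _ => ?_
    have hrhs_nn : 0 ≤ W0L y *
        ((if thr ≤ β y then (1:ℝ) else 0)
          + (if thr ≤ β y then (0:ℝ) else 1) * Count G y) :=
      mul_nonneg (hW0Lnn y) (add_nonneg (hindnn y)
        (mul_nonneg (hindnn' y) (hCountnn G y)))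
    by_cases hcond : ∃ m0 : Fin K → ZMod q, 0 < WL W L (Matrix.vecMul m0 G) y ∧
        ∀ m' : Fin K → ZMod q, m' ≠ m0 → WL W L (Matrix.vecMul m' G) y = 0
    · rw [if_pos hcond]; exact hrhs_nn
    · rw [if_neg hcond, hWL0 G y]
      rcases eq_or_lt_of_le (hW0Lnn y) with h0 | h0
      · rw [← h0, zero_mul]
      · have hex : ∃ m' : Fin K → ZMod q, m' ≠ 0 ∧ 0 < WL W L (Matrix.vecMul m' G) y := by
          by_contra hno
          push_neg at hno
          refine hcond ⟨0, by rw [hWL0 G y]; exact h0, fun m' hm' => ?_⟩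
          exact le_antisymm (hno m' hm') (hWLnn _ _)
        by_cases hthr2 : thr ≤ β y
        · rw [if_pos hthr2, if_pos hthr2]
          have : W0L y * (1 + 0 * Count G y) = W0L y := by ring
          rw [this]
        · rw [if_neg hthr2, if_neg hthr2]
          obtain ⟨m', hm0, hpos⟩ := hex
          have h1 : (1:ℝ) ≤ Count G y := by
            have hmem : m' ∈ univ.filter (fun m' : Fin K → ZMod q => m' ≠ 0) :=
              Finset.mem_filter.2 ⟨mem_univ _, hm0⟩
            have := Finset.single_le_sum
              (f := fun m'' : Fin K → ZMod q =>
                (if 0 < WL W L (Matrix.vecMul m'' G) y then (1:ℝ) else 0))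
              (fun _ _ => by split <;> norm_num) hmem
            rwa [if_pos hpos] at this
          nlinarith [mul_le_mul_of_nonneg_left h1 (hW0Lnn y)]
  -- bound the typical-set term
  have hA : ∑ y : Fin L → Y, W0L y * (if thr ≤ β y then (1:ℝ) else 0)
      ≤ Real.exp (s*a*L) * f0 ^ L := by
    have hle : ∀ y : Fin L → Y, W0L y * (if thr ≤ β y then (1:ℝ) else 0)
        ≤ Real.exp (s*a*L) * (W0L y * β y ^ s) := by
      intro y
      by_cases hy : thr ≤ β y
      · rw [if_pos hy]
        have h1 : thr ^ s ≤ β y ^ s :=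
          Real.rpow_le_rpow (le_of_lt (Real.exp_pos _)) hy hs0
        have h2 : thr ^ s = Real.exp (-(a*↑L)*s) := by
          rw [hthr, Real.rpow_def_of_pos (Real.exp_pos _), Real.log_exp]
        have h3 : Real.exp (s*a*↑L) * Real.exp (-(a*↑L)*s) = 1 := by
          rw [← Real.exp_add]
          norm_num
          ring_nf
        rw [h2] at h1
        have h4 : (1:ℝ) ≤ Real.exp (s*a*↑L) * β y ^ s := by
          calc (1:ℝ) = Real.exp (s*a*↑L) * Real.exp (-(a*↑L)*s) := h3.symm
          _ ≤ Real.exp (s*a*↑L) * β y ^ s :=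
            mul_le_mul_of_nonneg_left h1 (le_of_lt (Real.exp_pos _))
        nlinarith [hW0Lnn y, mul_le_mul_of_nonneg_left h4 (hW0Lnn y)]
      · rw [if_neg hy]
        have : W0L y * (0:ℝ) = 0 := by ring
        rw [this]
        exact mul_nonneg (le_of_lt (Real.exp_pos _))
          (mul_nonneg (hW0Lnn y) (Real.rpow_nonneg (hβnn y) s))
    calc ∑ y : Fin L → Y, W0L y * (if thr ≤ β y then (1:ℝ) else 0)
        ≤ ∑ y : Fin L → Y, Real.exp (s*a*L) * (W0L y * β y ^ s) :=
          Finset.sum_le_sum fun y _ => hle y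
      _ = Real.exp (s*a*L) * ∑ y : Fin L → Y, W0L y * β y ^ s := by
          rw [Finset.mul_sum]
      _ = Real.exp (s*a*L) * f0 ^ L := by
          congr 1
          have hfac : ∀ y : Fin L → Y, W0L y * β y ^ s
              = ∏ i, (W 0 (y i) * ((Ncomp W (y i) : ℝ)/(q:ℝ)) ^ s) := by
            intro y
            have hb : β y ^ s = ∏ i, ((Ncomp W (y i) : ℝ)/(q:ℝ)) ^ s := by
              rw [Real.finset_prod_rpow univ _
                (fun i _ => div_nonneg (Nat.cast_nonneg _) hq0.le) s]
            rw [hb, hW0L, ← Finset.prod_mul_distrib]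
          simp_rw [hfac]
          have h := Finset.prod_univ_sum (fun _ : Fin L => (univ : Finset Y))
            (fun _ y => W 0 y * ((Ncomp W y : ℝ)/(q:ℝ)) ^ s)
          rw [Fintype.piFinset_univ] at h
          rw [← h, hf0, Finset.prod_const, Finset.card_univ, Fintype.card_fin]
  -- bound the atypical term
  have hB : ∑ y : Fin L → Y, W0L y * ((if thr ≤ β y then (0:ℝ) else 1) * β y) ≤ thr := by
    calc ∑ y : Fin L → Y, W0L y * ((if thr ≤ β y then (0:ℝ) else 1) * β y)
        ≤ ∑ y : Fin L → Y, W0L y * thr := by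
          refine Finset.sum_le_sum fun y _ => ?_
          refine mul_le_mul_of_nonneg_left ?_ (hW0Lnn y)
          by_cases hy : thr ≤ β y
          · rw [if_pos hy]; rw [zero_mul]; exact le_of_lt (Real.exp_pos _)
          · rw [if_neg hy, one_mul]; exact le_of_lt (not_le.1 hy)
      _ = thr := by rw [← Finset.sum_mul, hsumW0L, one_mul]
  -- average over G
  set cardA : ℝ := (Fintype.card (Matrix (Fin K) (Fin L) (ZMod q)) : ℝ) with hcardA
  have hcardAnn : (0:ℝ) ≤ cardA := Nat.cast_nonneg _
  have hfiltcard : ((univ.filter (fun m' : Fin K → ZMod q => m' ≠ 0)).card : ℝ)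
      ≤ (q:ℝ)^K := by
    have h1 : (univ.filter (fun m' : Fin K → ZMod q => m' ≠ 0)).card
        ≤ Fintype.card (Fin K → ZMod q) := by
      rw [← Finset.card_univ]; exact Finset.card_filter_le _ _
    have h2 : Fintype.card (Fin K → ZMod q) = q^K := by
      rw [Fintype.card_fun, ZMod.card, Fintype.card_fin]
    calc ((univ.filter (fun m' : Fin K → ZMod q => m' ≠ 0)).card : ℝ)
        ≤ (Fintype.card (Fin K → ZMod q) : ℝ) := Nat.cast_le.2 h1
      _ = (q:ℝ)^K := by rw [h2]; push_cast; ring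
  have havg : ∑ G : Matrix (Fin K) (Fin L) (ZMod q),
      erasureProbMsg W L (fun m' => Matrix.vecMul m' G) 0
      ≤ cardA * (Real.exp (s*a*L) * f0 ^ L + (q:ℝ)^K * thr) := by
    calc ∑ G : Matrix (Fin K) (Fin L) (ZMod q),
        erasureProbMsg W L (fun m' => Matrix.vecMul m' G) 0
        ≤ ∑ G : Matrix (Fin K) (Fin L) (ZMod q), ∑ y : Fin L → Y, W0L y *
            ((if thr ≤ β y then (1:ℝ) else 0)
              + (if thr ≤ β y then (0:ℝ) else 1) * Count G y) :=
          Finset.sum_le_sum fun G _ => hpoint G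
      _ = ∑ y : Fin L → Y, ∑ G : Matrix (Fin K) (Fin L) (ZMod q), W0L y *
            ((if thr ≤ β y then (1:ℝ) else 0)
              + (if thr ≤ β y then (0:ℝ) else 1) * Count G y) := Finset.sum_comm
      _ = ∑ y : Fin L → Y, (cardA * (W0L y * (if thr ≤ β y then (1:ℝ) else 0))
            + ((univ.filter (fun m' : Fin K → ZMod q => m' ≠ 0)).card : ℝ) * cardA *
              (W0L y * ((if thr ≤ β y then (0:ℝ) else 1) * β y))) := by
          refine Finset.sum_congr rfl fun y _ => ?_
          have hCsum : ∑ G : Matrix (Fin K) (Fin L) (ZMod q), Count G y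
              = ((univ.filter (fun m' : Fin K → ZMod q => m' ≠ 0)).card : ℝ)
                * (cardA * β y) := by
            rw [hCount]
            rw [Finset.sum_comm]
            have : ∀ m' ∈ univ.filter (fun m' : Fin K → ZMod q => m' ≠ 0),
                ∑ G : Matrix (Fin K) (Fin L) (ZMod q),
                  (if 0 < WL W L (Matrix.vecMul m' G) y then (1:ℝ) else 0)
                = cardA * β y := by
              intro m' hm'
              exact hcount m' (Finset.mem_filter.1 hm').2 y
            rw [Finset.sum_congr rfl this, Finset.sum_const, nsmul_eq_mul]
          calc ∑ G : Matrix (Fin K) (Fin L) (ZMod q), W0L y *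
                ((if thr ≤ β y then (1:ℝ) else 0)
                  + (if thr ≤ β y then (0:ℝ) else 1) * Count G y)
              = ∑ G : Matrix (Fin K) (Fin L) (ZMod q),
                  (W0L y * (if thr ≤ β y then (1:ℝ) else 0)
                    + W0L y * (if thr ≤ β y then (0:ℝ) else 1) * Count G y) :=
                Finset.sum_congr rfl fun G _ => by ring
            _ = cardA * (W0L y * (if thr ≤ β y then (1:ℝ) else 0))
                + W0L y * (if thr ≤ β y then (0:ℝ) else 1)
                  * ∑ G : Matrix (Fin K) (Fin L) (ZMod q), Count G y := by
                rw [Finset.sum_add_distrib, Finset.sum_const, Finset.card_univ,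
                  nsmul_eq_mul, ← Finset.mul_sum, hcardA]
            _ = cardA * (W0L y * (if thr ≤ β y then (1:ℝ) else 0))
                + ((univ.filter (fun m' : Fin K → ZMod q => m' ≠ 0)).card : ℝ) * cardA *
                  (W0L y * ((if thr ≤ β y then (0:ℝ) else 1) * β y)) := by
                rw [hCsum]; ring
      _ ≤ cardA * (Real.exp (s*a*L) * f0 ^ L) +
            ((univ.filter (fun m' : Fin K → ZMod q => m' ≠ 0)).card : ℝ) * cardA * thr := by
          rw [Finset.sum_add_distrib, ← Finset.mul_sum, ← Finset.mul_sum]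
          exact add_le_add (mul_le_mul_of_nonneg_left hA hcardAnn)
            (mul_le_mul_of_nonneg_left hB
              (mul_nonneg (Nat.cast_nonneg _) hcardAnn))
      _ ≤ cardA * (Real.exp (s*a*L) * f0 ^ L + (q:ℝ)^K * thr) := by
          have hthrpos : (0:ℝ) < thr := Real.exp_pos _
          nlinarith [mul_le_mul_of_nonneg_right
            (mul_le_mul_of_nonneg_right hfiltcard hcardAnn) hthrpos.le]
  have hconst : ∑ _G : Matrix (Fin K) (Fin L) (ZMod q),
      (Real.exp (s*a*L) * f0 ^ L + (q:ℝ)^K * thr)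
      = cardA * (Real.exp (s*a*L) * f0 ^ L + (q:ℝ)^K * thr) := by
    rw [Finset.sum_const, Finset.card_univ, nsmul_eq_mul, hcardA]
  obtain ⟨G, -, hG⟩ := Finset.exists_le_of_sum_le Finset.univ_nonempty
    (havg.trans_eq hconst.symm)
  exact ⟨G, hG⟩


section Sym
variable {q : ℕ} [NeZero q] {Y : Type*} [Fintype Y] (W : ZMod q → Y → ℝ)
  (T : Y → ZMod q → Y)
  (hTbij : ∀ x, Function.Bijective fun y => T y x)
  (hTsym : ∀ x₁ x₂ y, W x₁ y = W x₂ (T y (x₂ - x₁)))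

include hTsym in
omit [Fintype Y] in
lemma W_zero_T (x : ZMod q) (y : Y) : W 0 y = W x (T y x) := by
  have := hTsym 0 x y; rwa [sub_zero] at this

include hTsym in
omit [Fintype Y] in
lemma Ncomp_T (x : ZMod q) (y : Y) : Ncomp W (T y x) = Ncomp W y := by
  classical
  unfold Ncomp
  refine (Finset.card_bij (fun a _ => a + x) ?_ ?_ ?_).symm
  · intro a ha
    simp only [mem_filter, mem_univ, true_and] at ha ⊢
    have h := hTsym a (a + x) y
    rw [add_sub_cancel_left] at h
    rwa [← h]
  · intro a₁ _ a₂ _ h; exact add_right_cancel h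
  · intro b hb
    simp only [mem_filter, mem_univ, true_and] at hb ⊢
    refine ⟨b - x, ?_, by rw [sub_add_cancel]⟩
    have h := hTsym (b - x) b y
    rw [sub_sub_cancel] at h
    rwa [← h] at hb

include hTbij hTsym in
lemma rowsum_invariant (φ : Y → ℝ) (hφ : ∀ y x, φ (T y x) = φ y) (x : ZMod q) :
    ∑ y, W x y * φ y = ∑ y, W 0 y * φ y := by
  rw [← Equiv.sum_comp (Equiv.ofBijective _ (hTbij x)) (fun y => W x y * φ y)]
  refine Finset.sum_congr rfl fun y _ => ?_
  simp only [Equiv.ofBijective_apply]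
  rw [hφ, ← W_zero_T W T hTsym x y]

include hTbij hTsym in
lemma Rmax_eq_row_zero :
    Rmax W = ∑ y, W 0 y * Real.log ((q : ℝ) / (Ncomp W y : ℝ)) := by
  classical
  have hq : (Fintype.card (ZMod q) : ℝ) = (q : ℝ) := by rw [ZMod.card]
  have hNe : (q : ℝ) ≠ 0 := Nat.cast_ne_zero.2 (NeZero.ne q)
  unfold Rmax
  have step1 : ∀ y : Y, ((∑ x : ZMod q, W x y) / (Fintype.card (ZMod q) : ℝ)) *
      Real.log ((Fintype.card (ZMod q) : ℝ) / ((Finset.univ.filter fun x : ZMod q => 0 < W x y).card : ℝ))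
      = (1 / (q : ℝ)) * ∑ x : ZMod q, W x y * Real.log ((q : ℝ) / (Ncomp W y : ℝ)) := by
    intro y
    rw [hq, ← Finset.sum_mul, Ncomp]
    ring
  simp_rw [step1]
  rw [← Finset.mul_sum, Finset.sum_comm]
  have step2 : ∀ x : ZMod q, ∑ y : Y, W x y * Real.log ((q : ℝ) / (Ncomp W y : ℝ))
      = ∑ y : Y, W 0 y * Real.log ((q : ℝ) / (Ncomp W y : ℝ)) := by
    intro x
    exact rowsum_invariant W T hTbij hTsym _
      (fun y x' => by rw [Ncomp_T W T hTsym]) x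
  simp_rw [step2]
  rw [Finset.sum_const, Finset.card_univ, ZMod.card, nsmul_eq_mul]
  rw [← mul_assoc]
  rw [one_div, inv_mul_cancel₀ hNe, one_mul]
end Sym

lemma erasure_shift {q : ℕ} [NeZero q] {Y : Type*} [Fintype Y]
    (W : ZMod q → Y → ℝ) (T : Y → ZMod q → Y)
    (hTbij : ∀ x, Function.Bijective fun y => T y x)
    (hTsym : ∀ x₁ x₂ y, W x₁ y = W x₂ (T y (x₂ - x₁)))
    {K L : ℕ} (G : Matrix (Fin K) (Fin L) (ZMod q)) (m : Fin K → ZMod q) :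
    erasureProbMsg W L (fun m' => Matrix.vecMul m' G) m
      = erasureProbMsg W L (fun m' => Matrix.vecMul m' G) 0 := by
  classical
  set cb : (Fin K → ZMod q) → (Fin L → ZMod q) := fun m' => Matrix.vecMul m' G with hcb
  set c : Fin L → ZMod q := cb m with hc
  set e : (Fin L → Y) ≃ (Fin L → Y) :=
    Equiv.piCongrRight fun i => Equiv.ofBijective _ (hTbij (c i)) with he
  have heapp : ∀ (y : Fin L → Y) (i : Fin L), e y i = T (y i) (c i) := by
    intro y i; rfl
  have hWL : ∀ (m' : Fin K → ZMod q) (y : Fin L → Y),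
      WL W L (cb m') (e y) = WL W L (cb (m' - m)) y := by
    intro m' y
    unfold WL
    refine Finset.prod_congr rfl fun i _ => ?_
    rw [heapp]
    have hsub : cb (m' - m) = cb m' - c := by
      rw [hcb, hc]; exact Matrix.sub_vecMul G m' m
    have h := hTsym (cb (m' - m) i) (cb m' i) (y i)
    have h2 : cb m' i - cb (m' - m) i = c i := by
      rw [hsub]; simp
    rw [h2] at h
    exact h.symm
  have hP : ∀ y : Fin L → Y,
      (∃ m0, 0 < WL W L (cb m0) (e y) ∧ ∀ m', m' ≠ m0 → WL W L (cb m') (e y) = 0)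
      ↔ (∃ m0, 0 < WL W L (cb m0) y ∧ ∀ m', m' ≠ m0 → WL W L (cb m') y = 0) := by
    intro y
    constructor
    · rintro ⟨m0, h1, h2⟩
      refine ⟨m0 - m, by rwa [hWL] at h1, fun m' hm' => ?_⟩
      have := h2 (m' + m) (fun hh => hm' (by rw [← hh]; abel))
      rwa [hWL, add_sub_cancel_right] at this
    · rintro ⟨m0, h1, h2⟩
      refine ⟨m0 + m, by rw [hWL, add_sub_cancel_right]; exact h1, fun m' hm' => ?_⟩
      rw [hWL]
      exact h2 (m' - m) (fun hh => hm' (by rw [← hh]; abel))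
  unfold erasureProbMsg
  refine Eq.symm (Fintype.sum_equiv e _ _ fun y => ?_)
  rw [hWL m y, sub_self]
  by_cases h : ∃ m0, 0 < WL W L (cb m0) y ∧ ∀ m', m' ≠ m0 → WL W L (cb m') y = 0
  · rw [if_pos h, if_pos ((hP y).2 h)]
  · rw [if_neg h, if_neg fun hh => h ((hP y).1 hh)]

set_option maxHeartbeats 2000000 in
/-- For any rate `0 < R < R_max(W)` there exist `E > 0`, a sequence of dimensions `K_L` with
`(K_L/L)·log q → R`, and for every sufficiently large `L` a generator matrix `G_L` whose
linear block code has average (over messages) block erasure probability under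
zero-undetected-error decoding at most `e^{−E·L}`. -/
theorem exists_linear_codes_exponential_erasure
    (q : ℕ) [Fact q.Prime]
    {Y : Type*} [Fintype Y]
    (W : ZMod q → Y → ℝ)
    (hW0 : ∀ x y, 0 ≤ W x y) (hW1 : ∀ x, ∑ y, W x y = 1)
    (T : Y → ZMod q → Y)
    (hTbij : ∀ x, Function.Bijective fun y => T y x)
    (hTsym : ∀ x₁ x₂ y, W x₁ y = W x₂ (T y (x₂ - x₁)))
    (R : ℝ) (hR0 : 0 < R) (hRmax : R < Rmax W) :
    ∃ E : ℝ, 0 < E ∧ ∃ K : ℕ → ℕ,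
      Filter.Tendsto (fun L : ℕ => (K L : ℝ) / (L : ℝ) * Real.log q)
        Filter.atTop (nhds R) ∧
      ∀ᶠ L : ℕ in Filter.atTop, ∃ G : Matrix (Fin (K L)) (Fin L) (ZMod q),
        (1 / (q : ℝ) ^ (K L)) * ∑ m : Fin (K L) → ZMod q,
          erasureProbMsg W L (fun m' => Matrix.vecMul m' G) m ≤ Real.exp (-E * L) := by
  classical
  haveI : NeZero q := ⟨(Fact.out : q.Prime).ne_zero⟩
  have hq1 : (1:ℝ) < (q:ℝ) := by exact_mod_cast (Fact.out : q.Prime).one_lt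
  have hq0 : (0:ℝ) < (q:ℝ) := lt_trans one_pos hq1
  set C : ℝ := Real.log q with hC
  have hCpos : 0 < C := Real.log_pos hq1
  set δ : ℝ := (Rmax W - R)/2 with hδdef
  have hδ : 0 < δ := by rw [hδdef]; linarith
  set a : ℝ := R + δ with ha
  set s : ℝ := min 1 (δ/(2*C^2)) with hs
  have hs0 : 0 < s := lt_min one_pos (div_pos hδ (by positivity))
  have hs1 : s ≤ 1 := min_le_left _ _
  have hsC : s * C^2 ≤ δ/2 := by
    have h := min_le_right (1:ℝ) (δ/(2*C^2))
    have hC2 : 0 < C^2 := by positivity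
    calc s * C^2 ≤ (δ/(2*C^2)) * C^2 := mul_le_mul_of_nonneg_right (hs ▸ h) hC2.le
      _ = δ/2 := by field_simp
  set f0 : ℝ := ∑ y, W 0 y * ((Ncomp W y : ℝ)/(q : ℝ)) ^ s with hf0
  have hRrow : Rmax W = ∑ y, W 0 y * Real.log ((q : ℝ) / (Ncomp W y : ℝ)) :=
    Rmax_eq_row_zero W T hTbij hTsym
  have hf0nn : 0 ≤ f0 := Finset.sum_nonneg fun y _ =>
    mul_nonneg (hW0 0 y) (Real.rpow_nonneg (div_nonneg (Nat.cast_nonneg _) hq0.le) s)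
  have hf0le : f0 ≤ Real.exp (-(s * (Rmax W - δ/2))) := by
    have hterm : ∀ y : Y, W 0 y * ((Ncomp W y : ℝ)/(q:ℝ)) ^ s
        ≤ W 0 y * (1 - s * Real.log ((q:ℝ)/(Ncomp W y:ℝ)) + s^2*C^2) := by
      intro y
      rcases eq_or_lt_of_le (hW0 0 y) with h0 | h0
      · rw [← h0, zero_mul, zero_mul]
      · refine mul_le_mul_of_nonneg_left ?_ h0.le
        have hN1 : 1 ≤ Ncomp W y := by
          have hmem : (0:ZMod q) ∈ univ.filter (fun x : ZMod q => 0 < W x y) :=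
            Finset.mem_filter.2 ⟨mem_univ _, h0⟩
          exact Finset.card_pos.2 ⟨0, hmem⟩
        have hN1' : (1:ℝ) ≤ (Ncomp W y : ℝ) := by exact_mod_cast hN1
        have hNq : (Ncomp W y : ℝ) ≤ (q:ℝ) := by
          have h' : Ncomp W y ≤ Fintype.card (ZMod q) := by
            rw [← Finset.card_univ]; exact Finset.card_filter_le _ _
          rw [ZMod.card] at h'
          exact_mod_cast h'
        set α : ℝ := (Ncomp W y : ℝ)/(q:ℝ) with hα
        have hα0 : 0 < α := div_pos (by linarith) hq0
        have hα1 : α ≤ 1 := by rw [hα, div_le_one hq0]; exact hNq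
        have hlogα : Real.log α ≤ 0 := Real.log_nonpos hα0.le hα1
        have hlogαC : -C ≤ Real.log α := by
          have hαq : α * (q:ℝ) = (Ncomp W y : ℝ) := by
            rw [hα]; field_simp
          have he : Real.log α + C = Real.log (α * (q:ℝ)) := by
            rw [Real.log_mul hα0.ne' hq0.ne', hC]
          have : 0 ≤ Real.log α + C := by
            rw [he, hαq]; exact Real.log_nonneg hN1'
          linarith
        have hrw : α ^ s = Real.exp (Real.log α * s) := Real.rpow_def_of_pos hα0 s
        have hquad := exp_le_quadratic (t := Real.log α * s)
          (mul_nonpos_iff.2 (Or.inr ⟨hlogα, hs0.le⟩))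
        have hlogq : Real.log ((q:ℝ)/(Ncomp W y:ℝ)) = - Real.log α := by
          have hid : ((Ncomp W y : ℝ)/(q:ℝ))⁻¹ = (q:ℝ)/(Ncomp W y:ℝ) := inv_div _ _
          rw [← hid, Real.log_inv, hα]
        have hsq : (Real.log α * s)^2 ≤ s^2 * C^2 := by
          have h7 : (Real.log α)^2 ≤ C^2 := by nlinarith
          calc (Real.log α * s)^2 = s^2 * (Real.log α)^2 := by ring
            _ ≤ s^2 * C^2 := mul_le_mul_of_nonneg_left h7 (sq_nonneg s)
        rw [hrw, hlogq]
        calc Real.exp (Real.log α * s) ≤ 1 + Real.log α * s + (Real.log α * s)^2 := hquad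
          _ ≤ 1 - s * -Real.log α + s^2*C^2 := by nlinarith [hsq]
    have h1 : f0 ≤ ∑ y, W 0 y * (1 - s * Real.log ((q:ℝ)/(Ncomp W y:ℝ)) + s^2*C^2) := by
      rw [hf0]; exact Finset.sum_le_sum fun y _ => hterm y
    have h2 : ∑ y, W 0 y * (1 - s * Real.log ((q:ℝ)/(Ncomp W y:ℝ)) + s^2*C^2)
        = (1 + s^2*C^2) - s * Rmax W := by
      have e1 : ∀ y:Y, W 0 y * (1 - s * Real.log ((q:ℝ)/(Ncomp W y:ℝ)) + s^2*C^2)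
          = W 0 y * (1 + s^2*C^2) - s * (W 0 y * Real.log ((q:ℝ)/(Ncomp W y:ℝ))) :=
        fun y => by ring
      simp_rw [e1]
      rw [Finset.sum_sub_distrib, ← Finset.sum_mul, ← Finset.mul_sum, hW1 0, ← hRrow, one_mul]
    have h3 : (1 + s^2*C^2) - s * Rmax W ≤ 1 - s*(Rmax W - δ/2) := by
      nlinarith [mul_le_mul_of_nonneg_left hsC hs0.le]
    have h4 : 1 - s*(Rmax W - δ/2) ≤ Real.exp (-(s*(Rmax W - δ/2))) := by
      have := Real.add_one_le_exp (-(s*(Rmax W - δ/2))); linarith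
    linarith
  have hRmax2 : Rmax W = R + 2*δ := by rw [hδdef]; ring
  set E : ℝ := s * δ / 4 with hE
  have hEpos : 0 < E := by rw [hE]; positivity
  refine ⟨E, hEpos, fun L => ⌊R * L / C⌋₊, ?_, ?_⟩
  · -- the rate converges to R
    refine tendsto_of_tendsto_of_tendsto_of_le_of_le'
      (g := fun L : ℕ => R - C/(L:ℝ)) (h := fun _ : ℕ => R) ?_ tendsto_const_nhds ?_ ?_
    · have h0 : Filter.Tendsto (fun L : ℕ => C/(L:ℝ)) Filter.atTop (nhds 0) :=
        tendsto_const_div_atTop_nhds_zero_nat C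
      have := (tendsto_const_nhds : Filter.Tendsto (fun _ : ℕ => R) Filter.atTop (nhds R)).sub h0
      simpa using this
    · filter_upwards [Filter.eventually_ge_atTop 1] with L hL
      have hLpos : (0:ℝ) < (L:ℝ) := by exact_mod_cast hL
      have h2 : R*(L:ℝ)/C < (⌊R * (L:ℝ) / C⌋₊:ℝ) + 1 := Nat.lt_floor_add_one _
      have h3 : R * (L:ℝ) < ((⌊R * (L:ℝ) / C⌋₊:ℝ)+1)*C := (div_lt_iff₀ hCpos).1 h2
      rw [div_mul_eq_mul_div, le_div_iff₀ hLpos]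
      have h5 : (R - C/(L:ℝ)) * (L:ℝ) = R*(L:ℝ) - C := by field_simp
      rw [h5]
      nlinarith
    · filter_upwards [Filter.eventually_ge_atTop 1] with L hL
      have hLpos : (0:ℝ) < (L:ℝ) := by exact_mod_cast hL
      have h1 : (⌊R * (L:ℝ) / C⌋₊:ℝ) ≤ R*(L:ℝ)/C :=
        Nat.floor_le (by positivity)
      have h2 : (⌊R * (L:ℝ) / C⌋₊:ℝ) * C ≤ R*(L:ℝ) := (le_div_iff₀ hCpos).1 h1
      rw [div_mul_eq_mul_div, div_le_iff₀ hLpos]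
      linarith
  · -- existence of good generator matrices for large L
    rw [Filter.eventually_atTop]
    refine ⟨⌈Real.log 2 / E⌉₊, fun L hL => ?_⟩
    have hlog2 : Real.log 2 ≤ E * L := by
      have h1 : Real.log 2 / E ≤ (⌈Real.log 2 / E⌉₊:ℝ) := Nat.le_ceil _
      have h2 : ((⌈Real.log 2 / E⌉₊:ℕ):ℝ) ≤ (L:ℝ) := Nat.cast_le.2 hL
      rw [div_le_iff₀ hEpos] at h1
      nlinarith
    obtain ⟨G, hG⟩ := exists_good_G W hW0 hW1 ⌊R * (L:ℝ) / C⌋₊ L a s hs0.le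
    refine ⟨G, ?_⟩
    have hcardmsg : ((q:ℝ))^(⌊R * (L:ℝ) / C⌋₊) ≠ 0 := pow_ne_zero _ hq0.ne'
    have havg : (1 / (q:ℝ)^(⌊R*(L:ℝ)/C⌋₊)) * ∑ m : Fin ⌊R*(L:ℝ)/C⌋₊ → ZMod q,
        erasureProbMsg W L (fun m' => Matrix.vecMul m' G) m
        = erasureProbMsg W L (fun m' => Matrix.vecMul m' G) 0 := by
      rw [Finset.sum_congr rfl fun m _ => erasure_shift W T hTbij hTsym G m,
        Finset.sum_const, Finset.card_univ, nsmul_eq_mul]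
      have hcf : (Fintype.card (Fin ⌊R*(L:ℝ)/C⌋₊ → ZMod q) : ℝ)
          = (q:ℝ)^(⌊R*(L:ℝ)/C⌋₊) := by
        rw [Fintype.card_fun, ZMod.card, Fintype.card_fin]; push_cast; ring
      rw [hcf, one_div, inv_mul_cancel_left₀ hcardmsg]
    rw [havg]
    have hqK : ((q:ℝ))^(⌊R*(L:ℝ)/C⌋₊) ≤ Real.exp (R * (L:ℝ)) := by
      have h1 : (⌊R*(L:ℝ)/C⌋₊:ℝ) ≤ R*(L:ℝ)/C := Nat.floor_le (by positivity)
      have h2 : (⌊R*(L:ℝ)/C⌋₊:ℝ) * C ≤ R*(L:ℝ) := (le_div_iff₀ hCpos).1 h1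
      have h3 : ((q:ℝ))^(⌊R*(L:ℝ)/C⌋₊) = Real.exp ((⌊R*(L:ℝ)/C⌋₊:ℝ) * C) := by
        conv_lhs => rw [show (q:ℝ) = Real.exp C from by rw [hC]; exact (Real.exp_log hq0).symm]
        rw [← Real.exp_nat_mul]
      rw [h3]
      exact Real.exp_le_exp.2 h2
    calc erasureProbMsg W L (fun m' => Matrix.vecMul m' G) 0
        ≤ Real.exp (s*a*L) * f0 ^ L + (q:ℝ)^(⌊R*(L:ℝ)/C⌋₊) * Real.exp (-(a*L)) := hG
      _ ≤ Real.exp (-(s*δ/2) * L) + Real.exp (-δ * L) := by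
          have harg : s*a*(L:ℝ) + (L:ℝ)*(-(s*(Rmax W - δ/2))) = -(s*δ/2)*(L:ℝ) := by
            rw [ha, hRmax2]; ring
          have t1 : Real.exp (s*a*L) * f0 ^ L ≤ Real.exp (-(s*δ/2) * L) := by
            have hp : f0 ^ L ≤ (Real.exp (-(s * (Rmax W - δ/2))))^L :=
              pow_le_pow_left₀ hf0nn hf0le L
            have hq' : (Real.exp (-(s * (Rmax W - δ/2))))^L
                = Real.exp ((L:ℝ) * (-(s * (Rmax W - δ/2)))) := (Real.exp_nat_mul _ L).symm
            calc Real.exp (s*a*L) * f0 ^ L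
                ≤ Real.exp (s*a*L) * Real.exp ((L:ℝ) * (-(s * (Rmax W - δ/2)))) := by
                  rw [← hq']
                  exact mul_le_mul_of_nonneg_left hp (Real.exp_pos _).le
              _ = Real.exp (s*a*(L:ℝ) + (L:ℝ) * (-(s * (Rmax W - δ/2)))) :=
                  (Real.exp_add _ _).symm
              _ = Real.exp (-(s*δ/2) * L) := by rw [harg]
          have t2 : (q:ℝ)^(⌊R*(L:ℝ)/C⌋₊) * Real.exp (-(a*L)) ≤ Real.exp (-δ * L) := by
            calc (q:ℝ)^(⌊R*(L:ℝ)/C⌋₊) * Real.exp (-(a*(L:ℝ)))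
                ≤ Real.exp (R*(L:ℝ)) * Real.exp (-(a*(L:ℝ))) :=
                  mul_le_mul_of_nonneg_right hqK (Real.exp_pos _).le
              _ = Real.exp (R*(L:ℝ) + -(a*(L:ℝ))) := (Real.exp_add _ _).symm
              _ = Real.exp (-δ * (L:ℝ)) := by
                  rw [show R*(L:ℝ) + -(a*(L:ℝ)) = -δ*(L:ℝ) from by rw [ha]; ring]
          linarith
      _ ≤ Real.exp (-E * L) := by
          have hLnn : (0:ℝ) ≤ (L:ℝ) := Nat.cast_nonneg _
          have hd1 : Real.exp (-δ * (L:ℝ)) ≤ Real.exp (-(s*δ/2) * (L:ℝ)) := by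
            apply Real.exp_le_exp.2
            nlinarith [mul_nonneg (mul_nonneg hδ.le (by linarith : (0:ℝ) ≤ 2 - s)) hLnn]
          have h2exp : (2:ℝ) ≤ Real.exp (E * (L:ℝ)) := by
            rw [show (2:ℝ) = Real.exp (Real.log 2) from (Real.exp_log (by norm_num)).symm]
            exact Real.exp_le_exp.2 hlog2
          calc Real.exp (-(s*δ/2) * (L:ℝ)) + Real.exp (-δ*(L:ℝ))
              ≤ 2 * Real.exp (-(s*δ/2)*(L:ℝ)) := by linarith
            _ ≤ Real.exp (E*(L:ℝ)) * Real.exp (-(s*δ/2)*(L:ℝ)) :=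
                mul_le_mul_of_nonneg_right h2exp (Real.exp_pos _).le
            _ = Real.exp (E*(L:ℝ) + -(s*δ/2)*(L:ℝ)) := (Real.exp_add _ _).symm
            _ = Real.exp (-E * (L:ℝ)) := by
                rw [show E*(L:ℝ) + -(s*δ/2)*(L:ℝ) = -E*(L:ℝ) from by rw [hE]; ring]
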